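/- Define Y_a(x') = ∫_ℝ φ_a(x) exp(−(x−(1−α_t)x')²/(2α_t(2−α_t))) dx for 0 < α_t < 2. Then Y satisfies the recursion √a · Y_a = −(1−α_t)² √(a−1) · Y_{a−2} + (1−α_t) x' · Y_{a−1} for a ≥ 2, with Y_0 = √(2π α_t(2−α_t)) and Y_1(x') = (1−α_t) x' Y_0. -/

import Mathlib

open MeasureTheory Real Filter

noncomputable def phi : ℕ → ℝ → ℝ
  | 0 => fun _ => 1
  | 1 => fun x => x
  | (n + 2) => fun x =>
      (x * phi (n + 1) x - Real.sqrt ((n : ℝ) + 1) * phi n x) / Real.sqrt ((n : ℝ) + 2)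

noncomputable def ω0 (x : ℝ) : ℝ := (Real.sqrt (2 * Real.pi))⁻¹ * Real.exp (-x ^ 2 / 2)

noncomputable def Y (αt : ℝ) (a : ℕ) (x' : ℝ) : ℝ :=
  ∫ x : ℝ, phi a x * Real.exp (-(x - (1 - αt) * x') ^ 2 / (2 * αt * (2 - αt)))


lemma integ_pow_gauss {b : ℝ} (hb : 0 < b) (n : ℕ) :
    Integrable fun x : ℝ => x ^ n * Real.exp (-b * x ^ 2) := by
  set C : ℝ := (n.factorial : ℝ) * (2 / b) ^ n with hC
  have hCpos : 0 ≤ C := by positivity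
  have hmeas : AEStronglyMeasurable (fun x : ℝ => x ^ n * Real.exp (-b * x ^ 2)) volume :=
    ((continuous_pow n).mul (Real.continuous_exp.comp (by fun_prop))).aestronglyMeasurable
  refine Integrable.mono'
    (g := fun x => Real.exp (-b * x ^ 2) + C * Real.exp (-(b/2) * x ^ 2))
    ((integrable_exp_neg_mul_sq hb).add ((integrable_exp_neg_mul_sq (by linarith)).const_mul C))
    hmeas (Filter.Eventually.of_forall fun t => ?_)
  have h1 : |t| ^ n ≤ 1 + t ^ (2 * n) := by
    have h2 : (|t| ^ n) ^ 2 = t ^ (2 * n) := by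
      rw [← pow_mul, mul_comm n 2, ← abs_pow, abs_of_nonneg]
      rw [mul_comm 2 n, pow_mul]; positivity
    nlinarith [sq_nonneg (|t| ^ n - 1), abs_nonneg t, pow_nonneg (abs_nonneg t) n]
  have h3 : t ^ (2 * n) ≤ C * Real.exp ((b/2) * t ^ 2) := by
    have := Real.pow_div_factorial_le_exp (x := b/2 * t ^ 2) (by positivity) n
    have hfac : (0:ℝ) < n.factorial := by positivity
    rw [div_le_iff₀ hfac] at this
    calc t ^ (2*n) = (2/b)^n * ((b/2 * t^2) ^ n) := by
          rw [mul_pow, ← mul_assoc, ← mul_pow]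
          have h9 : 2/b*(b/2) = 1 := by field_simp
          rw [h9, one_pow, one_mul, ← pow_mul, mul_comm 2 n]
      _ ≤ (2/b)^n * (Real.exp (b/2 * t^2) * n.factorial) := by
          apply mul_le_mul_of_nonneg_left this (by positivity)
      _ = C * Real.exp ((b/2) * t ^ 2) := by rw [hC]; ring
  have hexp : (0:ℝ) < Real.exp (-b * t ^ 2) := Real.exp_pos _
  have : ‖t ^ n * Real.exp (-b * t ^ 2)‖ = |t| ^ n * Real.exp (-b * t ^ 2) := by
    rw [norm_mul, Real.norm_eq_abs, Real.norm_eq_abs, abs_pow,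
      abs_of_nonneg (Real.exp_nonneg _)]
  rw [this]
  calc |t| ^ n * Real.exp (-b * t ^ 2) ≤ (1 + t ^ (2*n)) * Real.exp (-b * t ^ 2) :=
        mul_le_mul_of_nonneg_right h1 hexp.le
    _ ≤ (1 + C * Real.exp ((b/2) * t ^ 2)) * Real.exp (-b * t ^ 2) := by
        apply mul_le_mul_of_nonneg_right (by linarith) hexp.le
    _ = Real.exp (-b * t ^ 2) + C * (Real.exp ((b/2) * t^2) * Real.exp (-b * t^2)) := by ring
    _ = Real.exp (-b * t ^ 2) + C * Real.exp (-(b/2) * t ^ 2) := by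
        rw [← Real.exp_add]; ring_nf

lemma integ_poly_gauss {b : ℝ} (hb : 0 < b) (m : ℝ) (Q : Polynomial ℝ) :
    Integrable fun x : ℝ => Q.eval x * Real.exp (-b * (x - m) ^ 2) := by
  have key : ∀ R : Polynomial ℝ, Integrable fun y : ℝ => R.eval y * Real.exp (-b * y ^ 2) := by
    intro R
    have : (fun y : ℝ => R.eval y * Real.exp (-b * y ^ 2))
        = fun y => ∑ i ∈ Finset.range (R.natDegree + 1),
            R.coeff i * (y ^ i * Real.exp (-b * y ^ 2)) := by
      funext y
      rw [Polynomial.eval_eq_sum_range, Finset.sum_mul]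
      simp [mul_assoc]
    rw [this]
    exact integrable_finset_sum _ fun i _ => (integ_pow_gauss hb i).const_mul _
  have := (key (Q.comp (Polynomial.X + Polynomial.C m))).comp_sub_right (g := m)
  refine this.congr (Filter.Eventually.of_forall fun x => ?_)
  simp [Polynomial.eval_comp]

noncomputable def hermP : ℕ → Polynomial ℝ
  | 0 => 1
  | 1 => Polynomial.X
  | (n + 2) => Polynomial.C (Real.sqrt ((n : ℝ) + 2))⁻¹ *
      (Polynomial.X * hermP (n + 1) - Polynomial.C (Real.sqrt ((n : ℝ) + 1)) * hermP n)

lemma phi_eq : ∀ (n : ℕ) (x : ℝ), phi n x = (hermP n).eval x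
  | 0, x => by simp [phi, hermP]
  | 1, x => by simp [phi, hermP]
  | (n + 2), x => by
      simp only [phi, hermP, Polynomial.eval_mul, Polynomial.eval_C, Polynomial.eval_sub,
        Polynomial.eval_X, phi_eq (n+1), phi_eq n]
      rw [div_eq_inv_mul]

lemma phi_rec (n : ℕ) (x : ℝ) :
    Real.sqrt ((n : ℝ) + 2) * phi (n + 2) x
      = x * phi (n + 1) x - Real.sqrt ((n : ℝ) + 1) * phi n x := by
  have h : (0:ℝ) < Real.sqrt ((n : ℝ) + 2) := Real.sqrt_pos.2 (by positivity)
  rw [show phi (n+2) x = (x * phi (n + 1) x - Real.sqrt ((n : ℝ) + 1) * phi n x) /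
    Real.sqrt ((n : ℝ) + 2) from rfl, mul_div_cancel₀ _ h.ne']

lemma hasDerivAt_phi : ∀ (n : ℕ) (x : ℝ),
    HasDerivAt (phi (n + 1)) (Real.sqrt ((n : ℝ) + 1) * phi n x) x
  | 0, x => by
      have h : HasDerivAt (phi 1) 1 x := hasDerivAt_id x
      have : Real.sqrt ((0:ℕ) + 1) * phi 0 x = 1 := by
        simp [phi]
      rw [this]; exact h
  | 1, x => by
      have h2 : (0:ℝ) < Real.sqrt 2 := Real.sqrt_pos.2 (by norm_num)
      have hdef : phi 2 = fun y : ℝ => (y * y - 1) / Real.sqrt 2 := by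
        funext y
        show (y * phi 1 y - Real.sqrt ((0:ℕ) + 1) * phi 0 y) / Real.sqrt ((0:ℕ) + 2) = _
        norm_num [phi]
      have key : HasDerivAt (phi 2) ((1 * x + x * 1) / Real.sqrt 2) x := by
        rw [hdef]
        exact (((hasDerivAt_id x).mul (hasDerivAt_id x)).sub_const 1).div_const _
      have : Real.sqrt ((1:ℕ) + 1) * phi 1 x = (1 * x + x * 1) / Real.sqrt 2 := by
        show Real.sqrt ((1:ℕ) + 1) * x = _
        rw [eq_div_iff h2.ne']
        push_cast
        rw [show (1:ℝ)+1 = 2 from by norm_num, mul_right_comm,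
          Real.mul_self_sqrt (by norm_num : (0:ℝ) ≤ 2)]
        ring
      rw [this]; exact key
  | (n + 2), x => by
      have hd1 : HasDerivAt (phi (n + 2)) (Real.sqrt ((n : ℝ) + 2) * phi (n + 1) x) x := by
        have h := hasDerivAt_phi (n + 1) x
        push_cast at h
        rwa [show (n : ℝ) + 1 + 1 = (n : ℝ) + 2 from by ring] at h
      have hd0 := hasDerivAt_phi n x
      have hs2 : Real.sqrt ((n:ℝ)+2) * Real.sqrt ((n:ℝ)+2) = (n:ℝ)+2 :=
        Real.mul_self_sqrt (by positivity)
      have hs3 : Real.sqrt ((n:ℝ)+3) * Real.sqrt ((n:ℝ)+3) = (n:ℝ)+3 :=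
        Real.mul_self_sqrt (by positivity)
      have hs3pos : (0:ℝ) < Real.sqrt ((n:ℝ)+3) := Real.sqrt_pos.2 (by positivity)
      have hdef : phi (n + 3) = fun y : ℝ =>
          (y * phi (n + 2) y - Real.sqrt ((n:ℝ) + 2) * phi (n + 1) y) / Real.sqrt ((n:ℝ) + 3) := by
        funext y
        show (y * phi (n + 2) y - Real.sqrt ((↑(n+1):ℝ) + 1) * phi (n + 1) y)
            / Real.sqrt ((↑(n+1):ℝ) + 2) = _
        push_cast
        rw [show (n:ℝ) + 1 + 1 = (n:ℝ) + 2 from by ring,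
          show (n:ℝ) + 1 + 2 = (n:ℝ) + 3 from by ring]
      have hD : HasDerivAt (phi (n + 3))
          ((1 * phi (n+2) x + x * (Real.sqrt ((n:ℝ)+2) * phi (n+1) x)
            - Real.sqrt ((n:ℝ)+2) * (Real.sqrt ((n:ℝ)+1) * phi n x)) / Real.sqrt ((n:ℝ)+3)) x := by
        rw [hdef]
        exact (((hasDerivAt_id x).mul hd1).sub (hd0.const_mul _)).div_const _
      have hval : Real.sqrt ((↑(n+2):ℝ) + 1) * phi (n + 2) x
          = (1 * phi (n+2) x + x * (Real.sqrt ((n:ℝ)+2) * phi (n+1) x)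
            - Real.sqrt ((n:ℝ)+2) * (Real.sqrt ((n:ℝ)+1) * phi n x)) / Real.sqrt ((n:ℝ)+3) := by
        push_cast
        rw [show (n:ℝ) + 2 + 1 = (n:ℝ) + 3 from by ring, eq_div_iff hs3pos.ne']
        have hrec := phi_rec n x
        have h5 : x * (Real.sqrt ((n:ℝ)+2) * phi (n+1) x)
            - Real.sqrt ((n:ℝ)+2) * (Real.sqrt ((n:ℝ)+1) * phi n x)
            = ((n:ℝ)+2) * phi (n+2) x := by
          calc x * (Real.sqrt ((n:ℝ)+2) * phi (n+1) x)
              - Real.sqrt ((n:ℝ)+2) * (Real.sqrt ((n:ℝ)+1) * phi n x)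
              = Real.sqrt ((n:ℝ)+2) * (x * phi (n+1) x - Real.sqrt ((n:ℝ)+1) * phi n x) := by ring
            _ = Real.sqrt ((n:ℝ)+2) * (Real.sqrt ((n:ℝ)+2) * phi (n+2) x) := by rw [hrec]
            _ = ((n:ℝ)+2) * phi (n+2) x := by rw [← mul_assoc, hs2]
        calc Real.sqrt ((n:ℝ)+3) * phi (n+2) x * Real.sqrt ((n:ℝ)+3)
            = ((n:ℝ)+3) * phi (n+2) x := by rw [mul_right_comm, hs3]
          _ = 1 * phi (n+2) x + x * (Real.sqrt ((n:ℝ)+2) * phi (n+1) x)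
              - Real.sqrt ((n:ℝ)+2) * (Real.sqrt ((n:ℝ)+1) * phi n x) := by
              rw [show 1 * phi (n+2) x + x * (Real.sqrt ((n:ℝ)+2) * phi (n+1) x)
                  - Real.sqrt ((n:ℝ)+2) * (Real.sqrt ((n:ℝ)+1) * phi n x)
                = 1 * phi (n+2) x + (x * (Real.sqrt ((n:ℝ)+2) * phi (n+1) x)
                  - Real.sqrt ((n:ℝ)+2) * (Real.sqrt ((n:ℝ)+1) * phi n x)) from by ring, h5]
              ring
      rw [show n + 2 + 1 = n + 3 from rfl, hval]
      exact hD

lemma key_ibp {b m : ℝ} (hb : 0 < b) (u u' : ℝ → ℝ) (Q Q' : Polynomial ℝ)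
    (hQ : ∀ x, u x = Q.eval x) (hQ' : ∀ x, u' x = Q'.eval x)
    (hd : ∀ x, HasDerivAt u (u' x) x) :
    ∫ x : ℝ, (x - m) * u x * Real.exp (-b * (x - m) ^ 2)
      = (2 * b)⁻¹ * ∫ x : ℝ, u' x * Real.exp (-b * (x - m) ^ 2) := by
  set g : ℝ → ℝ := fun x => Real.exp (-b * (x - m) ^ 2) with hgdef
  set g' : ℝ → ℝ := fun x => (-2 * b * (x - m)) * g x with hg'def
  have hg : ∀ x, HasDerivAt g (g' x) x := by
    intro x
    have hinner : HasDerivAt (fun y : ℝ => -b * (y - m) ^ 2)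
        (-b * (2 * (x - m) ^ 1 * 1)) x :=
      ((((hasDerivAt_id x).sub_const m).pow 2)).const_mul (-b)
    have := hinner.exp
    convert this using 1
    simp only [hg'def, hgdef]
    ring
  have huv : Integrable (u * g) := by
    refine (integ_poly_gauss hb m Q).congr (Eventually.of_forall fun x => ?_)
    simp [hgdef, hQ x]
  have hu'v : Integrable (u' * g) := by
    refine (integ_poly_gauss hb m Q').congr (Eventually.of_forall fun x => ?_)
    simp [hgdef, hQ' x]
  have huv' : Integrable (u * g') := by
    refine (integ_poly_gauss hb m
      (Polynomial.C (-2 * b) * (Polynomial.X - Polynomial.C m) * Q)).congr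
      (Eventually.of_forall fun x => ?_)
    simp only [Polynomial.eval_mul, Polynomial.eval_C, Polynomial.eval_sub, Polynomial.eval_X,
      Pi.mul_apply, hg'def, hgdef, hQ x]
    ring
  have h1 : ∫ x : ℝ, u x * g' x = -∫ x : ℝ, u' x * g x :=
    integral_mul_deriv_eq_deriv_mul_of_integrable (fun x _ => hd x) (fun x _ => hg x) huv' hu'v huv
  have h2 : ∫ x : ℝ, u x * g' x = (-2 * b) * ∫ x : ℝ, (x - m) * u x * g x := by
    rw [← integral_const_mul]
    congr 1
    funext x
    simp only [hg'def]
    ring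
  have hbne : (2 * b) ≠ 0 := by positivity
  rw [h2] at h1
  have : ∫ x : ℝ, (x - m) * u x * g x = (2 * b)⁻¹ * ∫ x : ℝ, u' x * g x := by
    field_simp
    linarith [h1]
  simpa [hgdef] using this

theorem stmt14 (αt : ℝ) (h1 : 0 < αt) (h2 : αt < 2) :
    (∀ x' : ℝ, Y αt 0 x' = Real.sqrt (2 * Real.pi * αt * (2 - αt))) ∧
    (∀ x' : ℝ, Y αt 1 x' = (1 - αt) * x' * Real.sqrt (2 * Real.pi * αt * (2 - αt))) ∧
    (∀ a : ℕ, 2 ≤ a → ∀ x' : ℝ,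
      Real.sqrt (a : ℝ) * Y αt a x'
        = -(1 - αt) ^ 2 * Real.sqrt ((a : ℝ) - 1) * Y αt (a - 2) x'
          + (1 - αt) * x' * Y αt (a - 1) x') := by
  have h3 : (0:ℝ) < 2 - αt := by linarith
  have hσ : (0:ℝ) < 2 * αt * (2 - αt) := by positivity
  set b : ℝ := (2 * αt * (2 - αt))⁻¹ with hbdef
  have hb : 0 < b := inv_pos.mpr hσ
  have hYrep : ∀ (c : ℕ) (x' : ℝ), Y αt c x'
      = ∫ x : ℝ, phi c x * Real.exp (-b * (x - (1 - αt) * x') ^ 2) := by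
    intro c x'
    unfold Y
    congr 1
    funext x
    congr 1
    rw [hbdef, div_eq_mul_inv]
    ring
  have h2binv : (2 * b)⁻¹ = αt * (2 - αt) := by
    rw [hbdef]
    field_simp
  have hY0 : ∀ m : ℝ, ∫ x : ℝ, Real.exp (-b * (x - m) ^ 2)
      = Real.sqrt (2 * Real.pi * αt * (2 - αt)) := by
    intro m
    rw [show (fun x : ℝ => Real.exp (-b * (x - m) ^ 2))
        = fun x : ℝ => (fun y : ℝ => Real.exp (-b * y ^ 2)) (x - m) from rfl,
      integral_sub_right_eq_self (fun y : ℝ => Real.exp (-b * y ^ 2)) m,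
      integral_gaussian b]
    congr 1
    rw [hbdef]
    field_simp
  have hkey : ∀ (m : ℝ) (k : ℕ),
      ∫ x : ℝ, (x - m) * phi (k + 1) x * Real.exp (-b * (x - m) ^ 2)
        = (αt * (2 - αt)) * ∫ x : ℝ, (Real.sqrt ((k:ℝ) + 1) * phi k x)
            * Real.exp (-b * (x - m) ^ 2) := by
    intro m k
    rw [← h2binv]
    exact key_ibp hb (phi (k + 1)) (fun x => Real.sqrt ((k:ℝ) + 1) * phi k x)
      (hermP (k + 1)) (Polynomial.C (Real.sqrt ((k:ℝ) + 1)) * hermP k)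
      (fun x => phi_eq (k + 1) x)
      (fun x => by simp [phi_eq k x])
      (fun x => hasDerivAt_phi k x)
  have hkey0 : ∀ m : ℝ,
      ∫ x : ℝ, (x - m) * Real.exp (-b * (x - m) ^ 2) = 0 := by
    intro m
    have := key_ibp (m := m) hb (phi 0) (fun _ => 0) (hermP 0) 0
      (fun x => phi_eq 0 x) (fun x => by simp)
      (fun x => by simpa [phi] using hasDerivAt_const x (1:ℝ))
    simpa [phi] using this
  refine ⟨?_, ?_, ?_⟩
  · intro x'
    rw [hYrep]
    simpa [phi] using hY0 ((1 - αt) * x')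
  · intro x'
    set m : ℝ := (1 - αt) * x' with hmdef
    rw [hYrep]
    have hsplit : (fun x : ℝ => phi 1 x * Real.exp (-b * (x - m) ^ 2))
        = fun x : ℝ => (x - m) * Real.exp (-b * (x - m) ^ 2)
          + m * Real.exp (-b * (x - m) ^ 2) := by
      funext x
      simp only [phi]
      ring
    rw [hsplit, integral_add, hkey0 m, integral_const_mul, hY0 m]
    · ring
    · refine (integ_poly_gauss hb m (Polynomial.X - Polynomial.C m)).congr
        (Eventually.of_forall fun x => by simp)
    · exact ((integ_poly_gauss hb m 1).congr
        (Eventually.of_forall fun x => by simp)).const_mul m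
  · intro a ha x'
    obtain ⟨n, rfl⟩ : ∃ n, a = n + 2 := ⟨a - 2, by omega⟩
    set m : ℝ := (1 - αt) * x' with hmdef
    have hcast1 : ((n + 2 : ℕ) : ℝ) = (n : ℝ) + 2 := by push_cast; ring
    rw [show n + 2 - 2 = n from rfl, show n + 2 - 1 = n + 1 from rfl, hcast1,
      show (n:ℝ) + 2 - 1 = (n:ℝ) + 1 from by ring]
    rw [hYrep, hYrep, hYrep]
    have int_poly : ∀ Q : Polynomial ℝ,
        Integrable fun x : ℝ => Q.eval x * Real.exp (-b * (x - m) ^ 2) :=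
      fun Q => integ_poly_gauss hb m Q
    have intA : Integrable fun x : ℝ => phi n x * Real.exp (-b * (x - m) ^ 2) :=
      (int_poly (hermP n)).congr (Eventually.of_forall fun x => by simp only [phi_eq])
    have intB : Integrable fun x : ℝ => phi (n + 1) x * Real.exp (-b * (x - m) ^ 2) :=
      (int_poly (hermP (n + 1))).congr (Eventually.of_forall fun x => by simp only [phi_eq])
    have intXB : Integrable fun x : ℝ =>
        (x - m) * phi (n + 1) x * Real.exp (-b * (x - m) ^ 2) :=
      (int_poly ((Polynomial.X - Polynomial.C m) * hermP (n + 1))).congr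
        (Eventually.of_forall fun x => by
          simp only [Polynomial.eval_mul, Polynomial.eval_sub, Polynomial.eval_X,
            Polynomial.eval_C, phi_eq])
    have intC : Integrable fun x : ℝ =>
        m * (phi (n + 1) x * Real.exp (-b * (x - m) ^ 2))
          - Real.sqrt ((n:ℝ) + 1) * (phi n x * Real.exp (-b * (x - m) ^ 2)) :=
      (intB.const_mul m).sub (intA.const_mul _)
    set A : ℝ := ∫ x : ℝ, phi n x * Real.exp (-b * (x - m) ^ 2) with hAdef
    set B : ℝ := ∫ x : ℝ, phi (n + 1) x * Real.exp (-b * (x - m) ^ 2) with hBdef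
    have step1 : Real.sqrt ((n : ℝ) + 2)
          * ∫ x : ℝ, phi (n + 2) x * Real.exp (-b * (x - m) ^ 2)
        = ∫ x : ℝ, ((x - m) * phi (n + 1) x * Real.exp (-b * (x - m) ^ 2)
            + (m * (phi (n + 1) x * Real.exp (-b * (x - m) ^ 2))
              - Real.sqrt ((n:ℝ) + 1) * (phi n x * Real.exp (-b * (x - m) ^ 2)))) := by
      rw [← integral_const_mul]
      congr 1
      funext x
      rw [← mul_assoc, phi_rec n x]
      ring
    have hsq : ∫ x : ℝ, Real.sqrt ((n:ℝ) + 1) * phi n x * Real.exp (-b * (x - m) ^ 2)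
        = Real.sqrt ((n:ℝ) + 1) * A := by
      rw [hAdef, ← integral_const_mul]
      congr 1
      funext x
      ring
    have step2 : Real.sqrt ((n : ℝ) + 2)
          * ∫ x : ℝ, phi (n + 2) x * Real.exp (-b * (x - m) ^ 2)
        = (αt * (2 - αt)) * (Real.sqrt ((n:ℝ) + 1) * A)
          + (m * B - Real.sqrt ((n:ℝ) + 1) * A) := by
      rw [step1, integral_add intXB intC,
        integral_sub (intB.const_mul m) (intA.const_mul _),
        integral_const_mul, integral_const_mul, ← hAdef, ← hBdef, hkey m n, hsq]
    linear_combination step2
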